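/- Let (φ_λ)_{λ∈Λ}, with Λ finite, be an orthonormal basis of ℝ^n, let Λ = ⋃_{a∈K} Λ_a be a partition of Λ into pairwise disjoint nonempty subsets, let Y ∈ ℝ^n, γ > 0 and w_a > 0 for each a ∈ K, and set q_a = γ w_a. Then the following three elements of ℝ^n coincide: (a) the block soft-thresholding estimator Σ_{a∈K} Σ_{λ∈Λ_a} (η₁(P_a Y, q_a))_λ φ_λ with η₁(x, q) = x·max(1 − q/‖x‖₂, 0); (b) the unique minimizer over β ∈ ℝ^n of the adaptive group lasso functional (1/2)‖Y − β‖₂² + γ Σ_{a∈K} w_a ‖P_a β‖₂; (c) the unique solution of: minimize (1/2)‖β‖₂² over β ∈ ℝ^n subject to ‖P_a(Y − β)‖₂ / w_a ≤ γ for every a ∈ K. -/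

import Mathlib

section aux
variable {E : Type*} [NormedAddCommGroup E] [InnerProductSpace ℝ E]

lemma soft_zero {y : E} {q : ℝ} (h : ‖y‖ ≤ q) :
    (max (1 - q / ‖y‖) 0) • y = 0 := by
  rcases eq_or_ne y 0 with rfl | hy
  · simp
  · have hy' : 0 < ‖y‖ := norm_pos_iff.mpr hy
    have : 1 - q / ‖y‖ ≤ 0 := by
      have : (1:ℝ) ≤ q / ‖y‖ := (one_le_div hy').mpr h
      linarith
    rw [max_eq_right this, zero_smul]

lemma soft_key1 (y b : E) (q : ℝ) (hq : 0 < q) :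
    (1/2) * ‖y - (max (1 - q / ‖y‖) 0) • y‖^2 + q * ‖(max (1 - q / ‖y‖) 0) • y‖
      + (1/2) * ‖b - (max (1 - q / ‖y‖) 0) • y‖^2
    ≤ (1/2) * ‖y - b‖^2 + q * ‖b‖ := by
  have hCS : (inner ℝ y b : ℝ) ≤ ‖y‖ * ‖b‖ := real_inner_le_norm y b
  have hex : ∀ u v : E, ‖u - v‖^2 = ‖u‖^2 - 2 * inner ℝ u v + ‖v‖^2 := fun u v => by
    rw [norm_sub_sq_real]
  rcases le_or_gt ‖y‖ q with hcase | hcase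
  · rw [soft_zero hcase]
    simp only [sub_zero, norm_zero]
    rw [hex y b]
    have hyb : (inner ℝ y b : ℝ) ≤ q * ‖b‖ := by
      calc (inner ℝ y b : ℝ) ≤ ‖y‖ * ‖b‖ := hCS
      _ ≤ q * ‖b‖ := mul_le_mul_of_nonneg_right hcase (norm_nonneg b)
    nlinarith [sq_nonneg ‖b‖]
  · set r := ‖y‖ with hr
    have hr0 : 0 < r := lt_trans hq hcase
    have hm : max (1 - q / r) 0 = 1 - q / r := max_eq_left (by
      have : q / r < 1 := (div_lt_one hr0).mpr hcase
      linarith)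
    rw [hm]
    have hmr : (1 - q / r) * r = r - q := by field_simp
    have hm0 : 0 ≤ 1 - q / r := by
      have : q / r < 1 := (div_lt_one hr0).mpr hcase
      linarith
    have h1 : ‖(1 - q / r) • y‖ = r - q := by
      rw [norm_smul, Real.norm_eq_abs, abs_of_nonneg hm0, ← hr, hmr]
    have h2 : ‖y - (1 - q / r) • y‖^2 = q^2 := by
      have : y - (1 - q / r) • y = (q / r) • y := by
        rw [sub_smul, one_smul]; module
      rw [this, norm_smul, Real.norm_eq_abs, abs_of_pos (div_pos hq hr0), ← hr]
      rw [div_mul_cancel₀ _ (ne_of_gt hr0)]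
    have h3 : ‖b - (1 - q / r) • y‖^2
        = ‖b‖^2 - 2 * (1 - q / r) * inner ℝ y b + (r - q)^2 := by
      rw [hex, real_inner_smul_right, norm_smul, Real.norm_eq_abs, abs_of_nonneg hm0,
        ← hr, hmr, real_inner_comm]
      ring
    rw [h1, h2, h3, hex y b]
    have hq2 : q / r * (r * ‖b‖ - inner ℝ y b) ≥ 0 := by
      apply mul_nonneg (le_of_lt (div_pos hq hr0))
      linarith
    have : q / r * r = q := div_mul_cancel₀ _ (ne_of_gt hr0)
    nlinarith

lemma soft_key2 (y : E) (q : ℝ) (hq : 0 < q) :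
    ‖y - (max (1 - q / ‖y‖) 0) • y‖ ≤ q := by
  rcases le_or_gt ‖y‖ q with hcase | hcase
  · rw [soft_zero hcase, sub_zero]; exact hcase
  · have hr0 : 0 < ‖y‖ := lt_trans hq hcase
    have hm : max (1 - q / ‖y‖) 0 = 1 - q / ‖y‖ := max_eq_left (by
      have : q / ‖y‖ < 1 := (div_lt_one hr0).mpr hcase
      linarith)
    rw [hm]
    have : y - (1 - q / ‖y‖) • y = (q / ‖y‖) • y := by
      rw [sub_smul, one_smul]; module
    rw [this, norm_smul, Real.norm_eq_abs, abs_of_pos (div_pos hq hr0),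
      div_mul_cancel₀ _ (ne_of_gt hr0)]

lemma soft_key3 (y b : E) (q : ℝ) (hq : 0 < q) (h : ‖y - b‖ ≤ q) :
    (1/2) * ‖(max (1 - q / ‖y‖) 0) • y‖^2 + (1/2) * ‖b - (max (1 - q / ‖y‖) 0) • y‖^2
    ≤ (1/2) * ‖b‖^2 := by
  rcases le_or_gt ‖y‖ q with hcase | hcase
  · rw [soft_zero hcase]; simp
  · set r := ‖y‖ with hr
    have hr0 : 0 < r := lt_trans hq hcase
    have hm : max (1 - q / r) 0 = 1 - q / r := max_eq_left (by
      have : q / r < 1 := (div_lt_one hr0).mpr hcase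
      linarith)
    rw [hm]
    have hmr : (1 - q / r) * r = r - q := by field_simp
    have hm0 : 0 ≤ 1 - q / r := by
      have : q / r < 1 := (div_lt_one hr0).mpr hcase
      linarith
    have hex : ∀ u v : E, ‖u - v‖^2 = ‖u‖^2 - 2 * inner ℝ u v + ‖v‖^2 := fun u v => by
      rw [norm_sub_sq_real]
    have hfeas : r^2 - q * r ≤ (inner ℝ y b : ℝ) := by
      have h1 : (inner ℝ y (y - b) : ℝ) ≤ r * ‖y - b‖ := real_inner_le_norm y (y - b)
      have h2 : (inner ℝ y (y - b) : ℝ) = r^2 - inner ℝ y b := by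
        rw [inner_sub_right, real_inner_self_eq_norm_sq]
      have h3 : r * ‖y - b‖ ≤ r * q := mul_le_mul_of_nonneg_left h (le_of_lt hr0)
      nlinarith
    have h1 : ‖(1 - q / r) • y‖ = r - q := by
      rw [norm_smul, Real.norm_eq_abs, abs_of_nonneg hm0, ← hr, hmr]
    have h3 : ‖b - (1 - q / r) • y‖^2
        = ‖b‖^2 - 2 * (1 - q / r) * inner ℝ y b + (r - q)^2 := by
      rw [hex, real_inner_smul_right, norm_smul, Real.norm_eq_abs, abs_of_nonneg hm0,
        ← hr, hmr, real_inner_comm]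
      ring
    rw [h1, h3]
    have hqr : q / r * r = q := div_mul_cancel₀ _ (ne_of_gt hr0)
    nlinarith [mul_nonneg hm0 (sub_nonneg.mpr hfeas)]

end aux

/-- Equivalence of block soft-thresholding, the adaptive group lasso, and the multiscale
Dantzig estimator in the regression case `X = I`: for an orthonormal basis `(φ_λ)_{λ∈Λ}` of
`ℝ^n`, a partition `Λ = ⋃_{a∈K} Λ_a` into pairwise disjoint nonempty blocks, data `Y`,
`γ > 0`, weights `w_a > 0` and `q_a = γ w_a`, the block soft-thresholding estimator
`β̂ = Σ_a Σ_{λ∈Λ_a} (η₁(P_a Y, q_a))_λ φ_λ` is (b) the unique minimizer of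
`β ↦ (1/2)‖Y − β‖₂² + γ Σ_a w_a ‖P_a β‖₂` and (c) the unique solution of:
minimize `(1/2)‖β‖₂²` subject to `‖P_a(Y − β)‖₂ / w_a ≤ γ` for all `a`. -/
theorem block_soft_eq_group_lasso_eq_dantzig {n : ℕ} {Λ K : Type*} [Fintype Λ] [Fintype K]
    (φ : OrthonormalBasis Λ ℝ (EuclideanSpace ℝ (Fin n)))
    (Blk : K → Finset Λ)
    (hdisj : ∀ a a' : K, a ≠ a' → Disjoint (Blk a) (Blk a'))
    (hne : ∀ a : K, (Blk a).Nonempty)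
    (hcover : ∀ l : Λ, ∃ a : K, l ∈ Blk a)
    (Y : EuclideanSpace ℝ (Fin n)) (γ : ℝ) (hγ : 0 < γ)
    (w : K → ℝ) (hw : ∀ a, 0 < w a)
    (q : K → ℝ) (hq : ∀ a : K, q a = γ * w a)
    -- `Pnorm a v = ‖P_a v‖₂`, the Euclidean norm of the block of coefficients of `v`
    (Pnorm : K → EuclideanSpace ℝ (Fin n) → ℝ)
    (hPnorm : ∀ (a : K) (v : EuclideanSpace ℝ (Fin n)),
      Pnorm a v = Real.sqrt (∑ l ∈ Blk a, (inner ℝ (φ l) v : ℝ) ^ 2))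
    -- (a) the block soft-thresholding estimator
    (βhat : EuclideanSpace ℝ (Fin n))
    (hβhat : βhat = ∑ a : K, ∑ l ∈ Blk a,
      ((inner ℝ (φ l) Y : ℝ) * max (1 - q a / Pnorm a Y) 0) • φ l) :
    -- (b) it is the unique minimizer of the adaptive group lasso functional
    ((∀ β : EuclideanSpace ℝ (Fin n), β ≠ βhat →
      (1 / 2) * ‖Y - βhat‖ ^ 2 + γ * ∑ a : K, w a * Pnorm a βhat <
      (1 / 2) * ‖Y - β‖ ^ 2 + γ * ∑ a : K, w a * Pnorm a β)) ∧
    -- (c) it is the unique solution of the multiscale Dantzig problem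
    ((∀ a : K, Pnorm a (Y - βhat) / w a ≤ γ) ∧
      ∀ β : EuclideanSpace ℝ (Fin n),
        (∀ a : K, Pnorm a (Y - β) / w a ≤ γ) → β ≠ βhat →
        (1 / 2) * ‖βhat‖ ^ 2 < (1 / 2) * ‖β‖ ^ 2) := by
  classical
  have hq0 : ∀ a : K, 0 < q a := fun a => by rw [hq]; exact mul_pos hγ (hw a)
  choose A hA using hcover
  have hAuniq : ∀ (l : Λ) (a : K), l ∈ Blk a → a = A l := by
    intro l a hl
    by_contra hne'
    exact Finset.disjoint_left.mp (hdisj a (A l) hne') hl (hA l)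
  -- block coefficient vectors
  let B : (a : K) → EuclideanSpace ℝ (Fin n) → EuclideanSpace ℝ (Blk a) :=
    fun a v => WithLp.toLp 2 (fun l => (inner ℝ (φ l.1) v : ℝ))
  have hBsq : ∀ (a : K) (v : EuclideanSpace ℝ (Fin n)),
      ‖B a v‖^2 = ∑ l ∈ Blk a, (inner ℝ (φ l) v : ℝ)^2 := by
    intro a v
    rw [EuclideanSpace.norm_eq, Real.sq_sqrt (by positivity)]
    rw [← Finset.sum_coe_sort (Blk a) (fun l => (inner ℝ (φ l) v : ℝ)^2)]
    exact Finset.sum_congr rfl (fun l _ => by rw [Real.norm_eq_abs, sq_abs])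
  have hPB : ∀ (a : K) (v : EuclideanSpace ℝ (Fin n)), Pnorm a v = ‖B a v‖ := by
    intro a v
    rw [hPnorm, ← hBsq, Real.sqrt_sq (norm_nonneg _)]
  have hBsub : ∀ (a : K) (u v : EuclideanSpace ℝ (Fin n)),
      B a (u - v) = B a u - B a v := by
    intro a u v
    ext l
    show (inner ℝ (φ l.1) (u - v) : ℝ) = (B a u - B a v) l
    rw [inner_sub_right]
    rfl
  have horth : ∀ i j : Λ, (inner ℝ (φ i) (φ j) : ℝ) = if i = j then 1 else 0 :=
    orthonormal_iff_ite.mp φ.orthonormal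
  have hcoef : ∀ l : Λ, (inner ℝ (φ l) βhat : ℝ)
      = (inner ℝ (φ l) Y : ℝ) * max (1 - q (A l) / Pnorm (A l) Y) 0 := by
    intro l
    rw [hβhat, inner_sum]
    have hblock : ∀ a : K,
        (inner ℝ (φ l) (∑ l' ∈ Blk a,
          ((inner ℝ (φ l') Y : ℝ) * max (1 - q a / Pnorm a Y) 0) • φ l') : ℝ)
        = if l ∈ Blk a then (inner ℝ (φ l) Y : ℝ) * max (1 - q a / Pnorm a Y) 0 else 0 := by
      intro a
      rw [inner_sum]
      rw [Finset.sum_congr rfl (fun l' _ => by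
        rw [real_inner_smul_right, horth l l'] : ∀ l' ∈ Blk a, (inner ℝ (φ l)
            (((inner ℝ (φ l') Y : ℝ) * max (1 - q a / Pnorm a Y) 0) • φ l') : ℝ)
          = ((inner ℝ (φ l') Y : ℝ) * max (1 - q a / Pnorm a Y) 0)
              * (if l = l' then (1:ℝ) else 0))]
      simp only [mul_ite, mul_one, mul_zero]
      rw [Finset.sum_ite_eq]
    rw [Finset.sum_congr rfl (fun a _ => hblock a)]
    rw [Finset.sum_eq_single (A l)]
    · rw [if_pos (hA l)]
    · intro a _ hne'
      rw [if_neg (fun hmem => hne' (hAuniq l a hmem))]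
    · intro h
      exact absurd (Finset.mem_univ _) h
  have hBhat : ∀ a : K, B a βhat = (max (1 - q a / Pnorm a Y) 0) • B a Y := by
    intro a
    ext l
    show (inner ℝ (φ l.1) βhat : ℝ) = ((max (1 - q a / Pnorm a Y) 0) • B a Y) l
    have ha : a = A l.1 := hAuniq l.1 a l.2
    rw [hcoef l.1, ← ha]
    show (inner ℝ (φ l.1) Y : ℝ) * max (1 - q a / Pnorm a Y) 0
      = (max (1 - q a / Pnorm a Y) 0) * (inner ℝ (φ l.1) Y : ℝ)
    ring
  have huniv : Finset.univ.biUnion Blk = (Finset.univ : Finset Λ) :=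
    Finset.eq_univ_iff_forall.mpr fun l => Finset.mem_biUnion.mpr ⟨A l, Finset.mem_univ _, hA l⟩
  have hnormsq : ∀ v : EuclideanSpace ℝ (Fin n), ‖v‖^2 = ∑ a : K, ‖B a v‖^2 := by
    intro v
    have h0 : ‖v‖ = ‖φ.repr v‖ := (LinearIsometryEquiv.norm_map φ.repr v).symm
    rw [h0, EuclideanSpace.norm_eq, Real.sq_sqrt (by positivity)]
    calc ∑ l : Λ, ‖φ.repr v l‖^2 = ∑ l : Λ, (inner ℝ (φ l) v : ℝ)^2 :=
          Finset.sum_congr rfl fun l _ => by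
            rw [φ.repr_apply_apply, Real.norm_eq_abs, sq_abs]
      _ = ∑ a : K, ∑ l ∈ Blk a, (inner ℝ (φ l) v : ℝ)^2 := by
          rw [← huniv, Finset.sum_biUnion (fun a _ a' _ hne' => hdisj a a' hne')]
      _ = ∑ a : K, ‖B a v‖^2 := Finset.sum_congr rfl fun a _ => (hBsq a v).symm
  have hinj : ∀ β : EuclideanSpace ℝ (Fin n), (∀ a, B a β = B a βhat) → β = βhat := by
    intro β h
    apply φ.repr.injective
    ext l
    rw [φ.repr_apply_apply, φ.repr_apply_apply]
    exact congrArg (fun x : EuclideanSpace ℝ (Blk (A l)) => x ⟨l, hA l⟩) (h (A l))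
  have hsum_pos : ∀ β : EuclideanSpace ℝ (Fin n), β ≠ βhat →
      0 < ∑ a : K, ‖B a β - B a βhat‖^2 := by
    intro β hβ
    by_contra hle
    push_neg at hle
    have hnn : ∀ a ∈ (Finset.univ : Finset K), 0 ≤ ‖B a β - B a βhat‖^2 :=
      fun a _ => sq_nonneg _
    have hz := (Finset.sum_eq_zero_iff_of_nonneg hnn).mp
      (le_antisymm hle (Finset.sum_nonneg hnn))
    apply hβ
    apply hinj
    intro a
    have h1 : ‖B a β - B a βhat‖ = 0 :=
      pow_eq_zero_iff (two_ne_zero) |>.mp (hz a (Finset.mem_univ a))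
    exact sub_eq_zero.mp (norm_eq_zero.mp h1)
  -- per-block inequalities transported to blocks
  have key1 : ∀ (a : K) (β : EuclideanSpace ℝ (Fin n)),
      (1/2) * ‖B a Y - B a βhat‖^2 + q a * ‖B a βhat‖
        + (1/2) * ‖B a β - B a βhat‖^2
      ≤ (1/2) * ‖B a Y - B a β‖^2 + q a * ‖B a β‖ := by
    intro a β
    have h := soft_key1 (B a Y) (B a β) (q a) (hq0 a)
    rw [← hPB a Y, ← hBhat a] at h
    exact h
  have hfun : ∀ v : EuclideanSpace ℝ (Fin n),
      (1/2) * ‖Y - v‖^2 + γ * ∑ a : K, w a * Pnorm a v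
      = ∑ a : K, ((1/2) * ‖B a Y - B a v‖^2 + q a * ‖B a v‖) := by
    intro v
    have h1 : ‖Y - v‖^2 = ∑ a : K, ‖B a Y - B a v‖^2 := by
      rw [hnormsq (Y - v)]
      exact Finset.sum_congr rfl fun a _ => by rw [hBsub]
    rw [h1, Finset.mul_sum, Finset.mul_sum, ← Finset.sum_add_distrib]
    exact Finset.sum_congr rfl fun a _ => by rw [hq, hPB]; ring
  refine ⟨?_, ?_, ?_⟩
  · -- (b)
    intro β hβ
    have hsum := Finset.sum_le_sum (fun a (_ : a ∈ Finset.univ) => key1 a β)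
    rw [hfun β, hfun βhat]
    have hpos := hsum_pos β hβ
    rw [Finset.sum_add_distrib] at hsum
    have hhalf : ∑ a : K, (1/2) * ‖B a β - B a βhat‖^2
        = (1/2) * ∑ a : K, ‖B a β - B a βhat‖^2 := by
      rw [Finset.mul_sum]
    rw [hhalf] at hsum
    linarith
  · -- (c) feasibility
    intro a
    rw [div_le_iff₀ (hw a)]
    have h := soft_key2 (B a Y) (q a) (hq0 a)
    rw [← hPB a Y, ← hBhat a] at h
    rw [hPB, hBsub]
    calc ‖B a Y - B a βhat‖ ≤ q a := h
      _ = γ * w a := hq a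
  · -- (c) uniqueness
    intro β hfeas hβ
    have key3 : ∀ a : K, (1/2) * ‖B a βhat‖^2 + (1/2) * ‖B a β - B a βhat‖^2
        ≤ (1/2) * ‖B a β‖^2 := by
      intro a
      have hf : ‖B a Y - B a β‖ ≤ q a := by
        have h := hfeas a
        rw [div_le_iff₀ (hw a)] at h
        rw [hPB, hBsub] at h
        rw [hq]
        exact h
      have h := soft_key3 (B a Y) (B a β) (q a) (hq0 a) hf
      rw [← hPB a Y, ← hBhat a] at h
      exact h
    rw [hnormsq βhat, hnormsq β]
    have hsum := Finset.sum_le_sum (fun a (_ : a ∈ Finset.univ) => key3 a)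
    have hpos := hsum_pos β hβ
    rw [Finset.sum_add_distrib, ← Finset.mul_sum, ← Finset.mul_sum, ← Finset.mul_sum] at hsum
    linarith
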